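/- Let n1, n2, n3, n4, m be nonnegative integers with n1 > n2, n3 ≥ n4, and m ≥ n1; let q = max(n1, n2, n3, n4, m) and let Q be the q×q shift matrix over 𝔽₂. Then there exist q×q matrices G_A, G_B over 𝔽₂ such that, with G_S = Q^{q−n3} G_A Q^{q−n1} + Q^{q−n4} G_B Q^{q−n2} and G_M = Q^{q−n3} G_A Q^{q−m} + Q^{q−n4} G_B Q^{q−m}, one has G_M = 0 and rank(G_S) − dim(range(G_S) ∩ range(G_M)) = min(n1, n4). -/

import Mathlib

/-- The `q × q` lower shift matrix over `𝔽₂`: entry `(i, j)` is `1` iff `i = j + 1`. -/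
def shiftQ (q : ℕ) : Matrix (Fin q) (Fin q) (ZMod 2) :=
  Matrix.of fun i j => if (i : ℕ) = (j : ℕ) + 1 then 1 else 0

lemma shiftQ_pow (q k : ℕ) :
    shiftQ q ^ k = Matrix.of fun i j : Fin q => if (i : ℕ) = (j : ℕ) + k then 1 else 0 := by
  induction k with
  | zero =>
    ext i j
    simp [Matrix.one_apply, Fin.ext_iff]
  | succ k ih =>
    ext i j
    rw [pow_succ, ih, Matrix.mul_apply]
    simp only [Matrix.of_apply, shiftQ, ite_zero_mul_ite_zero, one_mul]
    by_cases h : (j : ℕ) + 1 < q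
    · rw [Finset.sum_eq_single (⟨(j : ℕ) + 1, h⟩ : Fin q)]
      · simp only [Matrix.of_apply]
        congr 1
        · simp [eq_iff_iff]; omega
      · intro l _ hl
        rw [if_neg]
        rintro ⟨-, h2⟩
        exact hl (Fin.ext h2)
      · simp
    · rw [Finset.sum_eq_zero, eq_comm, if_neg]
      · omega
      · intro l _
        rw [if_neg]
        rintro ⟨-, h2⟩
        omega

open Matrix

lemma shiftQ_tpow_mul_pow (q k : ℕ) :
    (shiftQ q)ᵀ ^ k * shiftQ q ^ k =
      Matrix.of fun i j : Fin q => if i = j ∧ (i : ℕ) + k < q then 1 else 0 := by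
  ext i j
  rw [← Matrix.transpose_pow, shiftQ_pow, Matrix.mul_apply]
  simp only [Matrix.transpose_apply, Matrix.of_apply, ite_zero_mul_ite_zero, one_mul]
  by_cases h : (i : ℕ) + k < q
  · rw [Finset.sum_eq_single (⟨(i : ℕ) + k, h⟩ : Fin q)]
    · congr 1
      simp [eq_iff_iff, Fin.ext_iff]
      omega
    · intro l _ hl
      rw [if_neg]
      rintro ⟨h2, -⟩
      exact hl (Fin.ext h2)
    · simp
  · rw [Finset.sum_eq_zero, eq_comm, if_neg]
    · omega
    · intro l _
      rw [if_neg]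
      rintro ⟨h2, -⟩
      omega

lemma shiftQ_pow_mul_proj (q a n : ℕ) (hn : n ≤ q) :
    shiftQ q ^ a * Matrix.of (fun i j : Fin q => if i = j ∧ (i : ℕ) + (q - n) < q then (1 : ZMod 2) else 0) =
      Matrix.of fun i j : Fin q => if (i : ℕ) = (j : ℕ) + a ∧ (j : ℕ) < n then 1 else 0 := by
  ext i j
  rw [shiftQ_pow, Matrix.mul_apply]
  simp only [Matrix.of_apply, ite_zero_mul_ite_zero, one_mul]
  rw [Finset.sum_eq_single j]
  · congr 1
    simp [eq_iff_iff, Fin.ext_iff]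
    omega
  · intro l _ hl
    rw [if_neg]
    rintro ⟨-, h2, -⟩
    exact hl h2
  · simp

lemma rank_partial (q n a : ℕ) (hn : n ≤ q) (ha : a ≤ q) :
    (Matrix.of fun i j : Fin q =>
      if (i : ℕ) = (j : ℕ) + a ∧ (j : ℕ) < n then (1 : ZMod 2) else 0).rank
      = min n (q - a) := by
  set M : Matrix (Fin q) (Fin q) (ZMod 2) :=
    Matrix.of fun i j : Fin q =>
      if (i : ℕ) = (j : ℕ) + a ∧ (j : ℕ) < n then (1 : ZMod 2) else 0 with hM
  set K := min n (q - a) with hK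
  have hKq : K ≤ q - a := min_le_right _ _
  set g : Fin K → Fin q := fun j => ⟨(j : ℕ) + a, by omega⟩ with hg
  set f : Fin K → (Fin q → ZMod 2) := fun j => Pi.single (g j) 1 with hf
  have hcol : ∀ (j : Fin q) (hj : (j : ℕ) < K), Mᵀ j = Pi.single (⟨(j : ℕ) + a, by omega⟩ : Fin q) 1 := by
    intro j hj
    funext i
    simp only [Matrix.transpose_apply, hM, Matrix.of_apply]
    rw [Pi.single_apply]
    congr 1
    simp [eq_iff_iff, Fin.ext_iff]
    omega
  have hspan : Submodule.span (ZMod 2) (Set.range Mᵀ) = Submodule.span (ZMod 2) (Set.range f) := by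
    apply le_antisymm
    · rw [Submodule.span_le]
      rintro x ⟨j, rfl⟩
      by_cases hj : (j : ℕ) < K
      · rw [hcol j hj]
        apply Submodule.subset_span
        exact ⟨⟨(j : ℕ), hj⟩, rfl⟩
      · have h0 : Mᵀ j = 0 := by
          funext i
          simp only [Matrix.transpose_apply, hM, Matrix.of_apply, Pi.zero_apply]
          rw [if_neg]
          rintro ⟨h1, h2⟩
          omega
        rw [h0]
        exact Submodule.zero_mem _
    · rw [Submodule.span_le]
      rintro x ⟨j, rfl⟩
      have hjq : (j : ℕ) < q := by omega
      have : f j = Mᵀ ⟨(j : ℕ), hjq⟩ := by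
        rw [hcol _ (by simpa using j.2)]
      rw [this]
      exact Submodule.subset_span ⟨_, rfl⟩
  have hginj : Function.Injective g := by
    intro x y hxy
    have := Fin.val_eq_of_eq hxy
    simp only [hg] at this
    exact Fin.ext (by omega)
  have hli : LinearIndependent (ZMod 2) f := by
    have h2 := (Pi.basisFun (ZMod 2) (Fin q)).linearIndependent.comp g hginj
    have : (⇑(Pi.basisFun (ZMod 2) (Fin q)) ∘ g) = f := by
      funext j
      simp [hf, Function.comp]
    rwa [this] at h2
  rw [Matrix.rank_eq_finrank_span_cols, show M.col = Mᵀ from rfl, hspan, finrank_span_eq_card hli, Fintype.card_fin]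

/-- Source-to-destination transfer matrix
`G_S = Q^(q-n3) G_A Q^(q-n1) + Q^(q-n4) G_B Q^(q-n2)`. -/
def GSmat (q n1 n2 n3 n4 : ℕ) (GA GB : Matrix (Fin q) (Fin q) (ZMod 2)) :
    Matrix (Fin q) (Fin q) (ZMod 2) :=
  shiftQ q ^ (q - n3) * GA * shiftQ q ^ (q - n1) +
    shiftQ q ^ (q - n4) * GB * shiftQ q ^ (q - n2)

/-- Interference transfer matrix
`G_M = Q^(q-n3) G_A Q^(q-m) + Q^(q-n4) G_B Q^(q-m)`. -/
def GMmat (q n3 n4 m : ℕ) (GA GB : Matrix (Fin q) (Fin q) (ZMod 2)) :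
    Matrix (Fin q) (Fin q) (ZMod 2) :=
  shiftQ q ^ (q - n3) * GA * shiftQ q ^ (q - m) +
    shiftQ q ^ (q - n4) * GB * shiftQ q ^ (q - m)

/-- The achievable rate `rank G_S - dim (range G_S ∩ range G_M)` of a linear scheme. -/
noncomputable def linRate (q : ℕ) (GS GM : Matrix (Fin q) (Fin q) (ZMod 2)) : ℕ :=
  GS.rank - Module.finrank (ZMod 2)
    ↥(LinearMap.range GS.mulVecLin ⊓ LinearMap.range GM.mulVecLin)

/-- Case `n1 > n2`, `n3 ≥ n4`, `m ≥ n1`: the upper bound is achievable with `G_M = 0`. -/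
theorem rate_achievable_case2
    (n1 n2 n3 n4 m q : ℕ) (hq : q = max n1 (max n2 (max n3 (max n4 m))))
    (h12 : n2 < n1) (h34 : n4 ≤ n3) (hm : n1 ≤ m) :
    ∃ GA GB : Matrix (Fin q) (Fin q) (ZMod 2),
      GMmat q n3 n4 m GA GB = 0 ∧
      linRate q (GSmat q n1 n2 n3 n4 GA GB) (GMmat q n3 n4 m GA GB)
        = min n1 n4 := by
  have hn1 : n1 ≤ q := by omega
  have hn2 : n2 ≤ q := by omega
  have hn3 : n3 ≤ q := by omega
  have hn4 : n4 ≤ q := by omega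
  set Q := shiftQ q with hQdef
  set GB : Matrix (Fin q) (Fin q) (ZMod 2) := Qᵀ ^ (q - n1) with hGB
  set GA : Matrix (Fin q) (Fin q) (ZMod 2) := Q ^ (n3 - n4) * GB with hGA
  have h1 : Q ^ (q - n3) * GA = Q ^ (q - n4) * GB := by
    rw [hGA, ← mul_assoc, ← pow_add]
    congr 2
    omega
  -- G_M = 0
  have hGM : GMmat q n3 n4 m GA GB = 0 := by
    rw [GMmat, h1, ← two_smul (ZMod 2) (Q ^ (q - n4) * GB * Q ^ (q - m))]
    rw [show (2 : ZMod 2) = 0 by decide, zero_smul]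
  refine ⟨GA, GB, hGM, ?_⟩
  -- Q^q = 0
  have hQq : Q ^ q = 0 := by
    ext i j
    rw [hQdef, shiftQ_pow]
    simp only [Matrix.of_apply, Matrix.zero_apply]
    rw [if_neg]
    omega
  -- 1 + Q^(n1-n2) is a unit
  have hnil : IsNilpotent (Q ^ (n1 - n2)) := by
    refine ⟨q, ?_⟩
    rw [← pow_mul]
    obtain ⟨e, he⟩ : ∃ e, (n1 - n2) * q = q + e :=
      ⟨(n1 - n2) * q - q, by
        have h2 := Nat.le_mul_of_pos_left q (show 0 < n1 - n2 by omega)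
        omega⟩
    rw [he, pow_add, hQq, zero_mul]
  have hunit : IsUnit ((1 : Matrix (Fin q) (Fin q) (ZMod 2)) + Q ^ (n1 - n2)).det :=
    (Matrix.isUnit_iff_isUnit_det _).mp hnil.isUnit_one_add
  -- G_S = M * (1 + Q^(n1-n2))
  have hc : Q ^ (q - n2) = Q ^ (q - n1) * Q ^ (n1 - n2) := by
    rw [← pow_add]
    congr 1
    omega
  have hGS : GSmat q n1 n2 n3 n4 GA GB =
      (Q ^ (q - n4) * GB * Q ^ (q - n1)) * (1 + Q ^ (n1 - n2)) := by
    rw [GSmat, h1, hc]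
    noncomm_ring
  -- M is the explicit partial-shift matrix
  have hMexp : Q ^ (q - n4) * GB * Q ^ (q - n1) =
      Matrix.of fun i j : Fin q =>
        if (i : ℕ) = (j : ℕ) + (q - n4) ∧ (j : ℕ) < n1 then (1 : ZMod 2) else 0 := by
    rw [hGB, mul_assoc, hQdef, shiftQ_tpow_mul_pow]
    exact shiftQ_pow_mul_proj q (q - n4) n1 hn1
  -- rank computation
  have hrank : (GSmat q n1 n2 n3 n4 GA GB).rank = min n1 n4 := by
    rw [hGS, Matrix.rank_mul_eq_left_of_isUnit_det _ _ hunit, hMexp,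
      rank_partial q n1 (q - n4) hn1 (by omega)]
    congr 1
    omega
  rw [hGM, linRate, Matrix.mulVecLin_zero, LinearMap.range_zero, inf_bot_eq,
    finrank_bot, Nat.sub_zero, hrank]
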